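/- (Distance characterization of the Lipschitz-like property at infinity.) Let F : ℝ^n ⇉ ℝ^m be a set-valued mapping with closed graph and ȳ ∈ J(F). The following are equivalent: (i) F is Lipschitz-like around (∞, ȳ), i.e., there exist constants R > 0, ℓ > 0 and a neighborhood V of ȳ in ℝ^m such that F(x) ∩ V ⊆ F(x') + ℓ‖x − x'‖𝔹 for all x, x' ∈ F⁻¹(V) \ 𝔹_R; (ii) there exist constants R > 0, ℓ > 0 and a neighborhood V of ȳ in ℝ^m such that |d_F(x, y) − d_F(x', y')| ≤ ℓ(‖x − x'‖ + ‖y − y'‖) for all x, x' ∈ F⁻¹(V) \ 𝔹_R and all y, y' ∈ V. -/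

import Mathlib

open Filter Topology Set Metric Pointwise
open scoped RealInnerProductSpace ENNReal

noncomputable section

variable {E F G : Type*}
  [NormedAddCommGroup E] [InnerProductSpace ℝ E]
  [NormedAddCommGroup F] [InnerProductSpace ℝ F]
  [NormedAddCommGroup G] [InnerProductSpace ℝ G]

/-- The regular (Fréchet) normal cone to a subset of a product of inner product
spaces, at a point `p` (empty if `p ∉ Ω`). -/
def frechetNormalCone2 (Ω : Set (E × F)) (p : E × F) : Set (E × F) :=
  {ξ | p ∈ Ω ∧ ∀ ε > (0:ℝ), ∀ᶠ q in nhdsWithin p Ω,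
      ⟪ξ.1, q.1 - p.1⟫ + ⟪ξ.2, q.2 - p.2⟫ ≤ ε * ‖q - p‖}

/-- The limiting (Mordukhovich) normal cone. -/
def limitingNormalCone2 (Ω : Set (E × F)) (p : E × F) : Set (E × F) :=
  {ξ | ∃ pk : ℕ → E × F, ∃ ξk : ℕ → E × F,
    (∀ k, pk k ∈ Ω) ∧ Tendsto pk atTop (𝓝 p) ∧
    (∀ k, ξk k ∈ frechetNormalCone2 Ω (pk k)) ∧ Tendsto ξk atTop (𝓝 ξ)}

/-- The normal cone to `Ω ⊆ E × F` at `(∞, ȳ)`. -/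
def normalConeAtInfty (Ω : Set (E × F)) (ybar : F) : Set (E × F) :=
  {ξ | ∃ pk : ℕ → E × F, ∃ ξk : ℕ → E × F,
    (∀ k, pk k ∈ Ω) ∧ Tendsto (fun k => ‖(pk k).1‖) atTop atTop ∧
    Tendsto (fun k => (pk k).2) atTop (𝓝 ybar) ∧
    (∀ k, ξk k ∈ frechetNormalCone2 Ω (pk k)) ∧ Tendsto ξk atTop (𝓝 ξ)}

/-- `Ω ⊆ E × F` is locally closed at `(∞, ȳ)`. -/
def LocallyClosedAtInfty (Ω : Set (E × F)) (ybar : F) : Prop :=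
  ∃ R > (0:ℝ), ∃ V ∈ 𝓝 ybar, IsClosed V ∧
    IsClosed (Ω ∩ {p : E × F | R ≤ ‖p.1‖ ∧ p.2 ∈ V})

/-- Graph of a set-valued mapping. -/
def svGraph (S : E → Set F) : Set (E × F) := {p | p.2 ∈ S p.1}

/-- Jelonek set of a set-valued mapping. -/
def jelonek (S : E → Set F) : Set F :=
  {y | ∃ xk : ℕ → E, ∃ yk : ℕ → F,
    Tendsto (fun k => ‖xk k‖) atTop atTop ∧ (∀ k, yk k ∈ S (xk k)) ∧
    Tendsto yk atTop (𝓝 y)}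

/-- Coderivative of a set-valued mapping at a point of its graph. -/
def coderiv (S : E → Set F) (x : E) (y : F) (v : F) : Set E :=
  {u | (u, -v) ∈ limitingNormalCone2 (svGraph S) (x, y)}

/-- Coderivative of a set-valued mapping at `(∞, ȳ)`. -/
def coderivAtInfty (S : E → Set F) (ybar : F) (v : F) : Set E :=
  {u | (u, -v) ∈ normalConeAtInfty (svGraph S) ybar}

/-- Regular normal cone, one-space version. -/
def frechetNormalCone1 (Ω : Set E) (x : E) : Set E :=
  {ξ | x ∈ Ω ∧ ∀ ε > (0:ℝ), ∀ᶠ x' in nhdsWithin x Ω, ⟪ξ, x' - x⟫ ≤ ε * ‖x' - x‖}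

/-- Normal cone at infinity to an unbounded subset of `E`. -/
def normalConeAtInfty1 (Ω : Set E) : Set E :=
  {ξ | ∃ xk : ℕ → E, ∃ ξk : ℕ → E, (∀ k, xk k ∈ Ω) ∧
    Tendsto (fun k => ‖xk k‖) atTop atTop ∧
    (∀ k, ξk k ∈ frechetNormalCone1 Ω (xk k)) ∧ Tendsto ξk atTop (𝓝 ξ)}

/-- Epigraph of an extended-real-valued function. -/
def epiSet (f : E → EReal) : Set (E × ℝ) := {p | f p.1 ≤ (p.2 : EReal)}

/-- Graph of an extended-real-valued function, as a subset of `E × ℝ`. -/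
def gphFun (f : E → EReal) : Set (E × ℝ) := {p | f p.1 = (p.2 : EReal)}

/-- Jelonek set of a function. -/
def jelonekFun (f : E → EReal) : Set ℝ :=
  {y | ∃ xk : ℕ → E, Tendsto (fun k => ‖xk k‖) atTop atTop ∧
    Tendsto (fun k => f (xk k)) atTop (𝓝 (y : EReal))}

/-- Limiting subdifferential of `f` at `x` (empty outside `dom f`). -/
def limSubdiff (f : E → EReal) (x : E) : Set E :=
  {u | ∃ r : ℝ, f x = (r : EReal) ∧
    (u, (-1 : ℝ)) ∈ limitingNormalCone2 (epiSet f) (x, r)}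

/-- Limiting subdifferential of `f` at `(∞, ȳ)`. -/
def limSubdiffAtInfty (f : E → EReal) (ybar : ℝ) : Set E :=
  {u | (u, (-1 : ℝ)) ∈ normalConeAtInfty (epiSet f) ybar}

/-- Singular subdifferential of `f` at `(∞, ȳ)`. -/
def singSubdiffAtInfty (f : E → EReal) (ybar : ℝ) : Set E :=
  {u | (u, (0 : ℝ)) ∈ normalConeAtInfty (epiSet f) ybar}

/-- Inverse of a set-valued mapping. -/
def svInv (S : E → Set F) (y : F) : Set E := {x | y ∈ S x}

/-- Preimage `F⁻¹(V) = {x : F(x) ∩ V ≠ ∅}`. -/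
def svPreimage (S : E → Set F) (V : Set F) : Set E := {x | (S x ∩ V).Nonempty}

/-- Distance function of a set-valued mapping, with value `+∞` on empty values. -/
def dSV (S : E → Set F) (p : E × F) : EReal :=
  ((EMetric.infEdist p.2 (S p.1) : ℝ≥0∞) : EReal)

/-- Regular normal cone on `(E × F) × ℝ`. -/
def frechetNormalCone3 (Ω : Set ((E × F) × ℝ)) (p : (E × F) × ℝ) : Set ((E × F) × ℝ) :=
  {ξ | p ∈ Ω ∧ ∀ ε > (0:ℝ), ∀ᶠ q in nhdsWithin p Ω,
      ⟪ξ.1.1, q.1.1 - p.1.1⟫ + ⟪ξ.1.2, q.1.2 - p.1.2⟫ + ξ.2 * (q.2 - p.2)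
        ≤ ε * ‖q - p‖}

/-- Limiting normal cone on `(E × F) × ℝ`. -/
def limitingNormalCone3 (Ω : Set ((E × F) × ℝ)) (p : (E × F) × ℝ) : Set ((E × F) × ℝ) :=
  {ξ | ∃ pk ξk : ℕ → (E × F) × ℝ, (∀ k, pk k ∈ Ω) ∧ Tendsto pk atTop (𝓝 p) ∧
    (∀ k, ξk k ∈ frechetNormalCone3 Ω (pk k)) ∧ Tendsto ξk atTop (𝓝 ξ)}

/-- Limiting subdifferential of the distance function `d_F`. -/
def limSubdiffD (S : E → Set F) (p : E × F) : Set (E × F) :=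
  {w | ∃ r : ℝ, dSV S p = (r : EReal) ∧
    (w, (-1 : ℝ)) ∈ limitingNormalCone3 {q : (E × F) × ℝ | dSV S q.1 ≤ (q.2 : EReal)} (p, r)}

/-- The set `J⁺(F₁ + F₂, y)`. -/
def jplus (S₁ S₂ : E → Set F) (y : F) : Set (F × F) :=
  {q | ∃ xk : ℕ → E, ∃ y1k y2k : ℕ → F,
    Tendsto (fun k => ‖xk k‖) atTop atTop ∧
    (∀ k, y1k k ∈ S₁ (xk k)) ∧ (∀ k, y2k k ∈ S₂ (xk k)) ∧
    Tendsto y1k atTop (𝓝 q.1) ∧ Tendsto y2k atTop (𝓝 q.2) ∧ q.1 + q.2 = y}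

/-- The set `J°(F₂ ∘ F₁, y)`. -/
def jcirc (S₁ : E → Set G) (S₂ : G → Set F) (y : F) : Set G :=
  {z | ∃ xk : ℕ → E, ∃ zk : ℕ → G, ∃ yk : ℕ → F,
    Tendsto (fun k => ‖xk k‖) atTop atTop ∧ (∀ k, zk k ∈ S₁ (xk k)) ∧
    (∀ k, yk k ∈ S₂ (zk k)) ∧ Tendsto zk atTop (𝓝 z) ∧ Tendsto yk atTop (𝓝 y)}

/-- Composition `F₂ ∘ F₁` of set-valued mappings. -/
def svComp (S₂ : G → Set F) (S₁ : E → Set G) (x : E) : Set F :=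
  {y | ∃ z ∈ S₁ x, y ∈ S₂ z}

abbrev Eucl (n : ℕ) := EuclideanSpace ℝ (Fin n)

lemma dSV_eq_infDist {S : E → Set F} {x : E} {y : F} (h : (S x).Nonempty) :
    dSV S (x, y) = ((Metric.infDist y (S x) : ℝ) : EReal) := by
  unfold dSV
  have hne : EMetric.infEdist y (S x) ≠ ⊤ := Metric.infEdist_ne_top h
  conv_lhs => rw [← ENNReal.ofReal_toReal hne]
  rw [EReal.coe_ennreal_ofReal]
  simp only [Metric.infDist]
  rw [max_eq_left ENNReal.toReal_nonneg]
  rfl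

lemma svSlice_closed {S : E → Set F} (hS : IsClosed (svGraph S)) (x : E) :
    IsClosed (S x) := by
  have : S x = (fun y => ((x, y) : E × F)) ⁻¹' svGraph S := rfl
  rw [this]
  exact hS.preimage (Continuous.prodMk_right x)

/-- distance characterization of the Lipschitz-like property at
infinity. -/
theorem stmt14 {n m : ℕ} (S : Eucl n → Set (Eucl m)) (hS : IsClosed (svGraph S))
    (ybar : Eucl m) (hJ : ybar ∈ jelonek S) :
    (∃ R > (0:ℝ), ∃ ℓ > (0:ℝ), ∃ V ∈ 𝓝 ybar,
      ∀ x ∈ svPreimage S V \ closedBall (0 : Eucl n) R,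
        ∀ x' ∈ svPreimage S V \ closedBall (0 : Eucl n) R,
          S x ∩ V ⊆ S x' + closedBall (0 : Eucl m) (ℓ * ‖x - x'‖)) ↔
    (∃ R > (0:ℝ), ∃ ℓ > (0:ℝ), ∃ V ∈ 𝓝 ybar,
      ∀ x ∈ svPreimage S V \ closedBall (0 : Eucl n) R,
        ∀ x' ∈ svPreimage S V \ closedBall (0 : Eucl n) R,
          ∀ y ∈ V, ∀ y' ∈ V,
            dSV S (x, y) ≤ dSV S (x', y')
              + (((ℓ * (‖x - x'‖ + ‖y - y'‖) : ℝ) : EReal))) := by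
  constructor
  · rintro ⟨R, hR, ℓ, hℓ, V, hV, hLip⟩
    obtain ⟨ε, hε, hεV⟩ := Metric.mem_nhds_iff.mp hV
    set ρ : ℝ := ε / 4 with hρdef
    have hρ : 0 < ρ := by positivity
    have hball : closedBall ybar (3 * ρ) ⊆ V := fun z hz => by
      apply hεV
      rw [mem_closedBall] at hz
      rw [mem_ball]
      linarith
    have hsub : closedBall ybar ρ ⊆ V := fun z hz =>
      hball (closedBall_subset_closedBall (by linarith) hz)
    have hpre : svPreimage S (closedBall ybar ρ) ⊆ svPreimage S V := by
      rintro x ⟨w, hw1, hw2⟩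
      exact ⟨w, hw1, hsub hw2⟩
    refine ⟨R, hR, max ℓ 1, lt_of_lt_of_le one_pos (le_max_right _ _),
      closedBall ybar ρ, closedBall_mem_nhds _ hρ, ?_⟩
    intro x hx x' hx' y hy y' hy'
    have hxne : (S x).Nonempty := hx.1.mono inter_subset_left
    have hx'ne : (S x').Nonempty := hx'.1.mono inter_subset_left
    rw [dSV_eq_infDist hxne, dSV_eq_infDist hx'ne, ← EReal.coe_add,
      EReal.coe_le_coe_iff]
    -- step 2 : core estimate at y'
    have step2 : Metric.infDist y' (S x) ≤ Metric.infDist y' (S x') + ℓ * ‖x - x'‖ := by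
      have hℓx : 0 ≤ ℓ * ‖x - x'‖ := by positivity
      by_cases hcase : Metric.infDist y' (S x') < 2 * ρ
      · -- nearest point v' in S x' lies in V
        obtain ⟨v', hv'S, hv'd⟩ :=
          (svSlice_closed hS x').exists_infDist_eq_dist hx'ne y'
        have hv'V : v' ∈ V := by
          apply hball
          rw [mem_closedBall]
          have h1 : dist v' y' < 2 * ρ := by
            rw [dist_comm, ← hv'd]; exact hcase
          have h2 : dist y' ybar ≤ ρ := mem_closedBall.mp hy'
          calc dist v' ybar ≤ dist v' y' + dist y' ybar := dist_triangle _ _ _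
            _ ≤ 3 * ρ := by linarith
        have := hLip x' ⟨hpre hx'.1, hx'.2⟩ x ⟨hpre hx.1, hx.2⟩ ⟨hv'S, hv'V⟩
        obtain ⟨a, ha, b, hb, hab⟩ := this
        rw [mem_closedBall_zero_iff] at hb
        have : Metric.infDist y' (S x) ≤ dist y' a :=
          Metric.infDist_le_dist_of_mem ha
        have hd : dist y' a ≤ dist y' v' + ‖b‖ := by
          have : dist v' a = ‖b‖ := by
            rw [dist_eq_norm, ← hab]; simp
          calc dist y' a ≤ dist y' v' + dist v' a := dist_triangle _ _ _
            _ = dist y' v' + ‖b‖ := by rw [this]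
        have hxx : ‖x' - x‖ = ‖x - x'‖ := norm_sub_rev _ _
        calc Metric.infDist y' (S x) ≤ dist y' a := ‹_›
          _ ≤ dist y' v' + ‖b‖ := hd
          _ ≤ Metric.infDist y' (S x') + ℓ * ‖x' - x‖ := by rw [hv'd]; linarith
          _ = Metric.infDist y' (S x') + ℓ * ‖x - x'‖ := by rw [hxx]
      · -- infDist y' (S x') ≥ 2ρ, but infDist y' (S x) ≤ 2ρ
        push_neg at hcase
        obtain ⟨w, hwS, hwB⟩ := hx.1
        have h1 : Metric.infDist y' (S x) ≤ dist y' w :=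
          Metric.infDist_le_dist_of_mem hwS
        have h2 : dist y' w ≤ 2 * ρ := by
          have := mem_closedBall.mp hwB
          have := mem_closedBall.mp hy'
          calc dist y' w ≤ dist y' ybar + dist ybar w := dist_triangle _ _ _
            _ ≤ 2 * ρ := by rw [dist_comm ybar w]; linarith
        linarith
    have step1 : Metric.infDist y (S x) ≤ Metric.infDist y' (S x) + ‖y - y'‖ := by
      have := Metric.infDist_le_infDist_add_dist (x := y) (y := y') (s := S x)
      rwa [dist_eq_norm] at this
    have hfin : ℓ * ‖x - x'‖ + ‖y - y'‖ ≤ max ℓ 1 * (‖x - x'‖ + ‖y - y'‖) := by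
      have h1 : ℓ * ‖x - x'‖ ≤ max ℓ 1 * ‖x - x'‖ :=
        mul_le_mul_of_nonneg_right (le_max_left _ _) (norm_nonneg _)
      have h2 : 1 * ‖y - y'‖ ≤ max ℓ 1 * ‖y - y'‖ :=
        mul_le_mul_of_nonneg_right (le_max_right _ _) (norm_nonneg _)
      rw [one_mul] at h2
      rw [mul_add]
      linarith
    linarith
  · rintro ⟨R, hR, ℓ, hℓ, V, hV, hD⟩
    refine ⟨R, hR, ℓ, hℓ, V, hV, ?_⟩
    intro x hx x' hx' y hy
    have h1 := hD x' hx' x hx y hy.2 y hy.2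
    rw [sub_self, norm_zero, add_zero] at h1
    have h0 : dSV S (x, y) = ((0 : ℝ) : EReal) := by
      unfold dSV
      rw [show EMetric.infEdist (x, y).2 (S (x, y).1) = 0 from EMetric.infEdist_zero_of_mem hy.1]
      simp
    have hx'ne : (S x').Nonempty := hx'.1.mono inter_subset_left
    rw [h0, dSV_eq_infDist hx'ne, ← EReal.coe_add, EReal.coe_le_coe_iff,
      zero_add] at h1
    obtain ⟨v, hvS, hvd⟩ := (svSlice_closed hS x').exists_infDist_eq_dist hx'ne y
    refine ⟨v, hvS, y - v, ?_, by module⟩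
    rw [mem_closedBall_zero_iff, ← dist_eq_norm, ← hvd, norm_sub_rev x x']
    exact h1
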